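/- Let (𝔻, d) be a metric space and let X^θ, X_n^θ, Y_n^θ : Ω → 𝔻 (θ ∈ Θ, n ∈ ℕ) be Borel-measurable maps. Assume there is a separable subset 𝔻₀ ⊆ 𝔻 with ℙ(X^θ ∈ 𝔻₀) = 1 for all θ ∈ Θ, and that ω ↦ d(X_n^θ(ω), Y_n^θ(ω)) is measurable for all n and θ. If sup_{θ∈Θ} d_BL(X_n^θ, X^θ) → 0 as n → ∞ and, for every ε > 0, sup_{θ∈Θ} ℙ( d(X_n^θ, Y_n^θ) > ε ) → 0 as n → ∞, then sup_{θ∈Θ} d_BL(Y_n^θ, X^θ) → 0 as n → ∞. -/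

import Mathlib

open MeasureTheory Filter Topology

/-- The bounded Lipschitz distance between (the laws of) two `𝔻`-valued random variables:
the supremum of `|E f(X) − E f(Y)|` over all `f : 𝔻 → ℝ` bounded by `1` and `1`-Lipschitz. -/
noncomputable def dBL {Ω 𝔻 : Type*} [MeasurableSpace Ω] (P : Measure Ω)
    [PseudoMetricSpace 𝔻] (X Y : Ω → 𝔻) : ℝ :=
  ⨆ f : {f : 𝔻 → ℝ // (∀ x, |f x| ≤ 1) ∧ LipschitzWith 1 f},
    |(∫ ω, f.1 (X ω) ∂P) - ∫ ω, f.1 (Y ω) ∂P|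

section Aux

variable {Ω 𝔻 : Type*} [MeasurableSpace Ω] (P : Measure Ω) [IsProbabilityMeasure P]
  [MetricSpace 𝔻] [MeasurableSpace 𝔻] [BorelSpace 𝔻]

instance dBL_nonempty : Nonempty {f : 𝔻 → ℝ // (∀ x, |f x| ≤ 1) ∧ LipschitzWith 1 f} :=
  ⟨⟨fun _ => 0, fun x => by simp, (LipschitzWith.const 0).weaken (by norm_num)⟩⟩

lemma integrable_comp_aux {f : 𝔻 → ℝ} (hb : ∀ x, |f x| ≤ 1) (hl : LipschitzWith 1 f)
    {Z : Ω → 𝔻} (hZ : Measurable Z) : Integrable (fun ω => f (Z ω)) P :=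
  Integrable.mono' (integrable_const 1)
    ((hl.continuous.measurable.comp hZ).aestronglyMeasurable)
    (Filter.Eventually.of_forall fun ω => by simpa [Real.norm_eq_abs] using hb (Z ω))

lemma abs_integral_le_one {f : 𝔻 → ℝ} (hb : ∀ x, |f x| ≤ 1)
    {Z : Ω → 𝔻} : |∫ ω, f (Z ω) ∂P| ≤ 1 := by
  have := norm_integral_le_of_norm_le_const (C := 1) (μ := P) (f := fun ω => f (Z ω))
    (Filter.Eventually.of_forall fun ω => by simpa [Real.norm_eq_abs] using hb (Z ω))
  simpa [Real.norm_eq_abs] using this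

lemma dBL_le {X Y : Ω → 𝔻} {c : ℝ}
    (h : ∀ f : 𝔻 → ℝ, (∀ x, |f x| ≤ 1) → LipschitzWith 1 f →
      |(∫ ω, f (X ω) ∂P) - ∫ ω, f (Y ω) ∂P| ≤ c) : dBL P X Y ≤ c :=
  ciSup_le fun f => h f.1 f.2.1 f.2.2

lemma dBL_nonneg (X Y : Ω → 𝔻) : 0 ≤ dBL P X Y :=
  Real.iSup_nonneg fun _ => abs_nonneg _

lemma dBL_bddAbove (X Y : Ω → 𝔻) :
    BddAbove (Set.range fun f : {f : 𝔻 → ℝ // (∀ x, |f x| ≤ 1) ∧ LipschitzWith 1 f} =>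
      |(∫ ω, f.1 (X ω) ∂P) - ∫ ω, f.1 (Y ω) ∂P|) := by
  refine ⟨2, ?_⟩
  rintro x ⟨f, rfl⟩
  calc |(∫ ω, f.1 (X ω) ∂P) - ∫ ω, f.1 (Y ω) ∂P|
      ≤ |∫ ω, f.1 (X ω) ∂P| + |∫ ω, f.1 (Y ω) ∂P| := abs_sub _ _
    _ ≤ 1 + 1 := add_le_add (abs_integral_le_one P f.2.1) (abs_integral_le_one P f.2.1)
    _ = 2 := by norm_num

lemma dBL_le_two (X Y : Ω → 𝔻) : dBL P X Y ≤ 2 :=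
  ciSup_le fun f => by
    calc |(∫ ω, f.1 (X ω) ∂P) - ∫ ω, f.1 (Y ω) ∂P|
        ≤ |∫ ω, f.1 (X ω) ∂P| + |∫ ω, f.1 (Y ω) ∂P| := abs_sub _ _
      _ ≤ 1 + 1 := add_le_add (abs_integral_le_one P f.2.1) (abs_integral_le_one P f.2.1)
      _ = 2 := by norm_num

end Aux

/-- **Uniform Slutsky theorem in metric spaces.** If `X_n^θ → X^θ` uniformly in distribution
over `Θ` and `d(X_n^θ, Y_n^θ) → 0` uniformly in probability over `Θ`, then
`Y_n^θ → X^θ` uniformly in distribution over `Θ`. -/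
theorem uniform_slutsky
    {Ω 𝔻 Θ : Type*} [MeasurableSpace Ω] (P : Measure Ω) [IsProbabilityMeasure P]
    [MetricSpace 𝔻] [MeasurableSpace 𝔻] [BorelSpace 𝔻] [Nonempty Θ]
    (X : Θ → Ω → 𝔻) (Xn Yn : ℕ → Θ → Ω → 𝔻)
    (hX : ∀ θ, Measurable (X θ)) (hXn : ∀ n θ, Measurable (Xn n θ))
    (hYn : ∀ n θ, Measurable (Yn n θ))
    (hsep : ∃ 𝔻₀ : Set 𝔻, TopologicalSpace.IsSeparable 𝔻₀ ∧ ∀ θ, ∀ᵐ ω ∂P, X θ ω ∈ 𝔻₀)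
    (hdistmeas : ∀ n θ, Measurable fun ω => dist (Xn n θ ω) (Yn n θ ω))
    (hXconv : Tendsto (fun n => ⨆ θ, dBL P (Xn n θ) (X θ)) atTop (𝓝 0))
    (hprob : ∀ ε > (0 : ℝ),
      Tendsto (fun n => ⨆ θ, P {ω | ε < dist (Xn n θ ω) (Yn n θ ω)}) atTop (𝓝 0)) :
    Tendsto (fun n => ⨆ θ, dBL P (Yn n θ) (X θ)) atTop (𝓝 0) := by
  rw [NormedAddCommGroup.tendsto_nhds_zero]
  intro ε hε
  have h4 : (0:ℝ) < ε / 4 := by linarith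
  have h8 : (0:ℝ) < ε / 8 := by linarith
  filter_upwards [hXconv.eventually_lt_const h4,
    (hprob (ε/4) h4).eventually_lt_const (ENNReal.ofReal_pos.mpr h8)] with n h1 h2
  have key : ∀ θ, dBL P (Yn n θ) (X θ) ≤ 3 * ε / 4 := by
    intro θ
    apply dBL_le
    intro f hb hl
    -- the bad event
    set A : Set Ω := {ω | ε/4 < dist (Xn n θ ω) (Yn n θ ω)} with hAdef
    have hA : MeasurableSet A := measurableSet_lt measurable_const (hdistmeas n θ)
    have hPA : P A < ENNReal.ofReal (ε/8) :=
      lt_of_le_of_lt (le_iSup (fun θ => P {ω | ε/4 < dist (Xn n θ ω) (Yn n θ ω)}) θ) h2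
    have hPAr : (P A).toReal < ε / 8 := by
      have := (ENNReal.lt_ofReal_iff_toReal_lt (measure_ne_top P A)).mp hPA
      exact this
    have hiY : Integrable (fun ω => f (Yn n θ ω)) P := integrable_comp_aux P hb hl (hYn n θ)
    have hiXn : Integrable (fun ω => f (Xn n θ ω)) P := integrable_comp_aux P hb hl (hXn n θ)
    have hind : Integrable (fun ω => ε/4 + A.indicator (fun _ => (2:ℝ)) ω) P := by
      refine (integrable_const _).add ?_
      rw [integrable_indicator_iff hA]
      exact (integrable_const 2).integrableOn
    have hbound : ∀ ω, |f (Yn n θ ω) - f (Xn n θ ω)|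
        ≤ ε/4 + A.indicator (fun _ => (2:ℝ)) ω := by
      intro ω
      by_cases hω : ω ∈ A
      · have : |f (Yn n θ ω) - f (Xn n θ ω)| ≤ 2 := by
          calc |f (Yn n θ ω) - f (Xn n θ ω)| ≤ |f (Yn n θ ω)| + |f (Xn n θ ω)| := abs_sub _ _
            _ ≤ 1 + 1 := add_le_add (hb _) (hb _)
            _ = 2 := by norm_num
        simp only [Set.indicator_of_mem hω]
        linarith
      · have hd : dist (Xn n θ ω) (Yn n θ ω) ≤ ε/4 := by
          simp only [hAdef, Set.mem_setOf_eq, not_lt] at hω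
          exact hω
        have := hl.dist_le_mul (Yn n θ ω) (Xn n θ ω)
        rw [Real.dist_eq] at this
        simp only [Set.indicator_of_notMem hω]
        rw [dist_comm] at hd
        simp only [NNReal.coe_one, one_mul] at this
        linarith
    have hterm1 : |(∫ ω, f (Yn n θ ω) ∂P) - ∫ ω, f (Xn n θ ω) ∂P| ≤ ε/4 + 2 * (P A).toReal := by
      calc |(∫ ω, f (Yn n θ ω) ∂P) - ∫ ω, f (Xn n θ ω) ∂P|
          = |∫ ω, (f (Yn n θ ω) - f (Xn n θ ω)) ∂P| := by rw [integral_sub hiY hiXn]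
        _ ≤ ∫ ω, |f (Yn n θ ω) - f (Xn n θ ω)| ∂P := by
            simpa [Real.norm_eq_abs] using
              norm_integral_le_integral_norm (μ := P) (fun ω => f (Yn n θ ω) - f (Xn n θ ω))
        _ ≤ ∫ ω, (ε/4 + A.indicator (fun _ => (2:ℝ)) ω) ∂P :=
            integral_mono (hiY.sub hiXn).abs hind hbound
        _ = ε/4 + 2 * (P A).toReal := by
            rw [integral_add (integrable_const _)
              ((integrable_indicator_iff hA).mpr (integrable_const 2).integrableOn),
              integral_const, integral_indicator_const _ hA]
            simp [mul_comm]
            rfl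
    have hterm2 : |(∫ ω, f (Xn n θ ω) ∂P) - ∫ ω, f (X θ ω) ∂P| ≤ dBL P (Xn n θ) (X θ) :=
      le_ciSup (dBL_bddAbove P (Xn n θ) (X θ)) ⟨f, hb, hl⟩
    have hd2 : dBL P (Xn n θ) (X θ) < ε/4 :=
      lt_of_le_of_lt (le_ciSup (f := fun θ => dBL P (Xn n θ) (X θ))
        ⟨2, by rintro x ⟨θ', rfl⟩; exact dBL_le_two P _ _⟩ θ) h1
    calc |(∫ ω, f (Yn n θ ω) ∂P) - ∫ ω, f (X θ ω) ∂P|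
        ≤ |(∫ ω, f (Yn n θ ω) ∂P) - ∫ ω, f (Xn n θ ω) ∂P|
          + |(∫ ω, f (Xn n θ ω) ∂P) - ∫ ω, f (X θ ω) ∂P| := abs_sub_le _ _ _
      _ ≤ (ε/4 + 2 * (P A).toReal) + dBL P (Xn n θ) (X θ) := add_le_add hterm1 hterm2
      _ ≤ 3 * ε / 4 := by linarith
  have hnn : 0 ≤ ⨆ θ, dBL P (Yn n θ) (X θ) := Real.iSup_nonneg fun θ => dBL_nonneg P _ _
  rw [Real.norm_eq_abs, abs_of_nonneg hnn]
  calc (⨆ θ, dBL P (Yn n θ) (X θ)) ≤ 3 * ε / 4 := ciSup_le key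
    _ < ε := by linarith
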